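/- Let n ≥ 1 and let K ⊆ ℝ^n be compact, regarded as a subset of ℂ^n via the standard embedding. Let U ⊆ ℂ^n be open with K ⊆ U, let f : U → ℂ be holomorphic, and let ε > 0. Then there exist an open set V ⊆ ℂ^n with K ⊆ V ⊆ U and an entire function g : ℂ^n → ℂ such that |f(z) − g(z)| ≤ ε for all z ∈ V. -/

import Mathlib

/-- **The Runge property of real compacts in `ℂ^n`**: if `K ⊆ ℝ^n` is compact (viewed
inside `ℂ^n`) and `f` is holomorphic on an open neighbourhood `U` of `K` in `ℂ^n`, then
for every `ε > 0` there are an open set `V` with `K ⊆ V ⊆ U` and an entire function `g`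
with `|f − g| ≤ ε` on `V`. -/
theorem stmt_16 (n : ℕ) (hn : 1 ≤ n)
    (K : Set (Fin n → ℝ)) (hK : IsCompact K)
    (e : (Fin n → ℝ) → (Fin n → ℂ)) (he : ∀ x j, e x j = (x j : ℂ))
    (U : Set (Fin n → ℂ)) (hU : IsOpen U) (hKU : e '' K ⊆ U)
    (f : (Fin n → ℂ) → ℂ) (hf : DifferentiableOn ℂ f U)
    (ε : ℝ) (hε : 0 < ε) :
    ∃ V : Set (Fin n → ℂ), IsOpen V ∧ e '' K ⊆ V ∧ V ⊆ U ∧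
      ∃ g : (Fin n → ℂ) → ℂ, Differentiable ℂ g ∧
        ∀ z ∈ V, ‖f z - g z‖ ≤ ε := by
  classical
  set L : Set (Fin n → ℂ) := e '' K with hLdef
  have hce : Continuous e := by
    have : e = fun x j => (x j : ℂ) := by funext x j; exact he x j
    rw [this]
    exact continuous_pi fun j => Complex.continuous_ofReal.comp (continuous_apply j)
  have hLc : IsCompact L := hK.image hce
  haveI : CompactSpace L := isCompact_iff_compactSpace.mp hLc
  -- every point of L has real coordinates
  have hreal : ∀ z ∈ L, ∀ j, (starRingEnd ℂ) (z j) = z j := by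
    rintro z ⟨x, _, rfl⟩ j
    rw [he x j, Complex.conj_ofReal]
  -- coordinate functions on L
  let c : Fin n → C(L, ℂ) := fun j =>
    ⟨fun z => (z : Fin n → ℂ) j, (continuous_apply j).comp continuous_subtype_val⟩
  set S : Set C(L, ℂ) := Set.range c with hSdef
  have hSstar : star S = S := by
    have hstar : ∀ j, star (c j) = c j := by
      intro j
      ext z
      exact hreal z z.2 j
    ext g
    rw [Set.mem_star]
    constructor
    · rintro ⟨j, hj⟩
      exact ⟨j, by rw [← star_star g, ← hj, hstar]⟩
    · rintro ⟨j, rfl⟩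
      exact ⟨j, (hstar j).symm⟩
  set A : StarSubalgebra ℂ C(L, ℂ) := StarAlgebra.adjoin ℂ S with hAdef
  have hsep : A.SeparatesPoints := by
    intro z w hzw
    have : ∃ j, (z : Fin n → ℂ) j ≠ (w : Fin n → ℂ) j := by
      by_contra h
      push_neg at h
      exact hzw (Subtype.ext (funext h))
    obtain ⟨j, hj⟩ := this
    exact ⟨c j, ⟨c j, StarAlgebra.subset_adjoin ℂ S ⟨j, rfl⟩, rfl⟩, hj⟩
  have htop : A.topologicalClosure = ⊤ :=
    ContinuousMap.starSubalgebra_topologicalClosure_eq_top_of_separatesPoints A hsep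
  -- the restriction of f to L
  have hfc : ContinuousOn f L := hf.continuousOn.mono hKU
  let F : C(L, ℂ) := ⟨L.restrict f, hfc.restrict⟩
  have hF : F ∈ closure (A : Set C(L, ℂ)) := by
    have : F ∈ A.topologicalClosure := htop ▸ StarSubalgebra.mem_top
    exact this
  obtain ⟨g₀, hg₀A, hg₀⟩ := Metric.mem_closure_iff.mp hF (ε / 2) (by linarith)
  -- g₀ lies in the plain algebra adjoin of the coordinates
  have hg₀A' : g₀ ∈ Algebra.adjoin ℂ S := by
    have : g₀ ∈ Algebra.adjoin ℂ (S ∪ star S) := hg₀A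
    rwa [hSstar, Set.union_self] at this
  -- every element of the adjoin is the restriction of an entire function
  have key : ∀ h ∈ Algebra.adjoin ℂ S,
      ∃ g : (Fin n → ℂ) → ℂ, Differentiable ℂ g ∧ ∀ z : L, g z = h z := by
    intro h hh
    induction hh using Algebra.adjoin_induction with
    | mem x hx =>
      obtain ⟨j, rfl⟩ := hx
      exact ⟨fun z => z j, (ContinuousLinearMap.proj j :
        (Fin n → ℂ) →L[ℂ] ℂ).differentiable, fun z => rfl⟩
    | algebraMap r =>
      exact ⟨fun _ => r, differentiable_const r, fun z => rfl⟩
    | add x y hx hy ihx ihy =>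
      obtain ⟨gx, hgx, hgx'⟩ := ihx
      obtain ⟨gy, hgy, hgy'⟩ := ihy
      exact ⟨gx + gy, hgx.add hgy, fun z => by
        simp [hgx' z, hgy' z]⟩
    | mul x y hx hy ihx ihy =>
      obtain ⟨gx, hgx, hgx'⟩ := ihx
      obtain ⟨gy, hgy, hgy'⟩ := ihy
      exact ⟨gx * gy, hgx.mul hgy, fun z => by
        simp [hgx' z, hgy' z]⟩
  obtain ⟨g, hgdiff, hgeq⟩ := key g₀ hg₀A'
  -- on L, `‖f z - g z‖ < ε`
  have hbound : ∀ z ∈ L, ‖f z - g z‖ < ε := by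
    intro z hz
    have h1 : dist (F ⟨z, hz⟩) (g₀ ⟨z, hz⟩) ≤ dist F g₀ := ContinuousMap.dist_apply_le_dist _
    have h2 : ‖f z - g z‖ = dist (F ⟨z, hz⟩) (g₀ ⟨z, hz⟩) := by
      rw [dist_eq_norm]
      congr 1
      have : g z = g₀ ⟨z, hz⟩ := hgeq ⟨z, hz⟩
      simp [F, this]
      rfl
    rw [h2]
    calc dist (F ⟨z, hz⟩) (g₀ ⟨z, hz⟩) ≤ dist F g₀ := h1
      _ < ε / 2 := hg₀
      _ < ε := by linarith
  -- define V
  refine ⟨U ∩ (fun z => ‖f z - g z‖) ⁻¹' Set.Iio ε, ?_, ?_, Set.inter_subset_left, g, hgdiff, ?_⟩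
  · exact ContinuousOn.isOpen_inter_preimage
      ((hf.continuousOn.sub hgdiff.continuous.continuousOn).norm) hU isOpen_Iio
  · intro z hz
    exact ⟨hKU hz, hbound z hz⟩
  · rintro z ⟨_, hz⟩
    exact le_of_lt hz
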